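/- For n ≥ 3, a permutation σ ∈ S_n satisfies pmp_{\underline{1}23}(σ) = n-2 if and only if σ_{n-1} = n-1 and σ_n = n. -/

import Mathlib

/-- Number of positions `i` that start an occurrence of the pattern 123 in `σ`,
i.e. `pmp` of the positional marked pattern `\underline{1}23`. -/
noncomputable def pmpS123 {n : ℕ} (σ : Equiv.Perm (Fin n)) : ℕ :=
  Nat.card {i : Fin n // ∃ j k : Fin n, i < j ∧ j < k ∧ σ i < σ j ∧ σ j < σ k}

private lemma pmp_exists_pos (n : ℕ) (σ : Equiv.Perm (Fin n)) (m : ℕ) (hm : m < n) :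
    ∃ p : Fin n, (σ p : ℕ) = m := by
  refine ⟨σ.symm ⟨m, hm⟩, ?_⟩
  rw [Equiv.apply_symm_apply]

private lemma pmp_aux_forward (n : ℕ) (hn : 2 < n) (σ : Equiv.Perm (Fin n))
    (hall : ∀ i : Fin n, (i : ℕ) < n - 2 →
      ∃ j k : Fin n, i < j ∧ j < k ∧ σ i < σ j ∧ σ j < σ k) :
    σ ⟨n - 2, by omega⟩ = ⟨n - 2, by omega⟩ ∧ σ ⟨n - 1, by omega⟩ = ⟨n - 1, by omega⟩ := by
  have hP2 : ∀ i : Fin n, (i : ℕ) < n - 2 → (σ i : ℕ) + 2 < n := by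
    intro i hi
    obtain ⟨j, k, -, -, h1, h2⟩ := hall i hi
    have h1' : (σ i : ℕ) < (σ j : ℕ) := h1
    have h2' : (σ j : ℕ) < (σ k : ℕ) := h2
    have := (σ k).isLt
    omega
  obtain ⟨p, hvp⟩ := pmp_exists_pos n σ (n - 1) (by omega)
  obtain ⟨q, hvq⟩ := pmp_exists_pos n σ (n - 2) (by omega)
  have hpq : (p : ℕ) ≠ (q : ℕ) := by
    intro hc
    have : p = q := Fin.ext hc
    rw [this, hvq] at hvp
    omega
  have hpge : ¬ ((p : ℕ) < n - 2) := by
    intro hc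
    have := hP2 p hc
    omega
  have hqge : ¬ ((q : ℕ) < n - 2) := by
    intro hc
    have := hP2 q hc
    omega
  have hpn : (p : ℕ) < n := p.isLt
  have hqn : (q : ℕ) < n := q.isLt
  rcases Nat.lt_or_ge (p : ℕ) (n - 1) with hplt | hpge'
  · -- p = n - 2, q = n - 1 : derive a contradiction
    exfalso
    have hpval : (p : ℕ) = n - 2 := by omega
    have hqval : (q : ℕ) = n - 1 := by omega
    obtain ⟨r, hvr⟩ := pmp_exists_pos n σ (n - 3) (by omega)
    have hrlt : (r : ℕ) < n - 2 := by
      have h1 : (r : ℕ) < n := r.isLt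
      have h2 : (r : ℕ) ≠ (p : ℕ) := by
        intro hc
        have : r = p := Fin.ext hc
        rw [this, hvp] at hvr
        omega
      have h3 : (r : ℕ) ≠ (q : ℕ) := by
        intro hc
        have : r = q := Fin.ext hc
        rw [this, hvq] at hvr
        omega
      omega
    obtain ⟨j, k, hij, hjk, h1, h2⟩ := hall r hrlt
    have h1' : (σ r : ℕ) < (σ j : ℕ) := h1
    have h2' : (σ j : ℕ) < (σ k : ℕ) := h2
    have hjn := (σ j).isLt
    have hkn := (σ k).isLt
    rcases Nat.lt_or_ge (σ j : ℕ) (n - 1) with hc | hc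
    · -- (σ j : ℕ) = n - 2, so j = q, located at position n - 1, and k > j impossible
      have hσjq : σ j = σ q := Fin.ext (by rw [hvq]; omega)
      have hjq : j = q := σ.injective hσjq
      have hv1 : (j : ℕ) < (k : ℕ) := hjk
      have hv2 : (k : ℕ) < n := k.isLt
      have hv3 : (j : ℕ) = n - 1 := by rw [hjq, hqval]
      omega
    · -- (σ j : ℕ) = n - 1, so (σ k : ℕ) ≥ n, impossible
      omega
  · -- p = n - 1, q = n - 2 : the desired conclusion
    have hpval : (p : ℕ) = n - 1 := by omega
    have hqval : (q : ℕ) = n - 2 := by omega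
    constructor
    · have h1 : (⟨n - 2, by omega⟩ : Fin n) = q := Fin.ext (by simp; omega)
      rw [h1]
      exact Fin.ext (by rw [hvq, hqval])
    · have h1 : (⟨n - 1, by omega⟩ : Fin n) = p := Fin.ext (by simp; omega)
      rw [h1]
      exact Fin.ext (by rw [hvp, hpval])

private lemma pmp_aux_backward (n : ℕ) (hn : 2 < n) (σ : Equiv.Perm (Fin n))
    (h1 : σ ⟨n - 2, by omega⟩ = ⟨n - 2, by omega⟩)
    (h2 : σ ⟨n - 1, by omega⟩ = ⟨n - 1, by omega⟩)
    (i : Fin n) (hi : (i : ℕ) < n - 2) :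
    ∃ j k : Fin n, i < j ∧ j < k ∧ σ i < σ j ∧ σ j < σ k := by
  have hv1 : (σ ⟨n - 2, by omega⟩ : ℕ) = n - 2 := by rw [h1]
  have hv2 : (σ ⟨n - 1, by omega⟩ : ℕ) = n - 1 := by rw [h2]
  have hvi : (σ i : ℕ) < n - 2 := by
    have ha : (σ i : ℕ) < n := (σ i).isLt
    have hb : (σ i : ℕ) ≠ n - 2 := by
      intro hc
      have heq : σ i = σ ⟨n - 2, by omega⟩ := Fin.ext (by rw [hv1, hc])
      have := congrArg Fin.val (σ.injective heq)
      simp at this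
      omega
    have hcc : (σ i : ℕ) ≠ n - 1 := by
      intro hc
      have heq : σ i = σ ⟨n - 1, by omega⟩ := Fin.ext (by rw [hv2, hc])
      have := congrArg Fin.val (σ.injective heq)
      simp at this
      omega
    omega
  refine ⟨⟨n - 2, by omega⟩, ⟨n - 1, by omega⟩, ?_, ?_, ?_, ?_⟩
  · show (i : ℕ) < n - 2
    exact hi
  · show n - 2 < n - 1
    omega
  · show (σ i : ℕ) < (σ ⟨n - 2, by omega⟩ : ℕ)
    omega
  · show (σ ⟨n - 2, by omega⟩ : ℕ) < (σ ⟨n - 1, by omega⟩ : ℕ)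
    omega

set_option maxHeartbeats 800000 in
theorem stmt2 (n : ℕ) (hn : 3 ≤ n) (σ : Equiv.Perm (Fin n)) :
    pmpS123 σ = n - 2 ↔
      σ ⟨n - 2, by omega⟩ = ⟨n - 2, by omega⟩ ∧ σ ⟨n - 1, by omega⟩ = ⟨n - 1, by omega⟩ := by
  classical
  set P : Fin n → Prop := fun i => ∃ j k : Fin n, i < j ∧ j < k ∧ σ i < σ j ∧ σ j < σ k with hPdef
  have hcard : pmpS123 σ = (Finset.univ.filter P).card := by
    rw [pmpS123, Nat.card_eq_fintype_card]
    convert Fintype.card_subtype P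
  have hfull : (Finset.univ.filter (fun i : Fin n => (i : ℕ) < n - 2)).card = n - 2 := by
    have : (Finset.univ.filter (fun i : Fin n => (i : ℕ) < n - 2))
        = Finset.Iio ⟨n - 2, by omega⟩ := by
      ext x; simp [Fin.lt_def]
    rw [this]; simp [Fin.card_Iio]
  have hsub : Finset.univ.filter P ⊆ Finset.univ.filter (fun i : Fin n => (i : ℕ) < n - 2) := by
    intro i hi
    simp only [Finset.mem_filter, Finset.mem_univ, true_and] at hi ⊢
    obtain ⟨j, k, hij, hjk, -, -⟩ := hi
    have h1 : (i : ℕ) < (j : ℕ) := hij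
    have h2 : (j : ℕ) < (k : ℕ) := hjk
    have h3 : (k : ℕ) < n := k.isLt
    omega
  constructor
  · intro h
    rw [hcard] at h
    have heq : Finset.univ.filter P = Finset.univ.filter (fun i : Fin n => (i : ℕ) < n - 2) :=
      Finset.eq_of_subset_of_card_le hsub (by rw [h, hfull])
    have hall : ∀ i : Fin n, (i : ℕ) < n - 2 → P i := by
      intro i hi
      have : i ∈ Finset.univ.filter P := by rw [heq]; simp [hi]
      simpa using this
    exact pmp_aux_forward n hn σ hall
  · rintro ⟨h1, h2⟩
    have heq : Finset.univ.filter P = Finset.univ.filter (fun i : Fin n => (i : ℕ) < n - 2) := by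
      apply Finset.Subset.antisymm hsub
      intro i hi
      simp only [Finset.mem_filter, Finset.mem_univ, true_and] at hi ⊢
      exact pmp_aux_backward n hn σ h1 h2 i hi
    rw [hcard, heq, hfull]
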